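/- (Rokhlin Lemma) Let Ω be a separable metric space, (Ω, B(Ω), μ, T) a measure-preserving dynamical system with T aperiodic. Then for all d ∈ ℕ and ε > 0 there exists a set B ∈ B(Ω) such that the sets B, T^{-1}(B), ..., T^{-(d-1)}(B) are pairwise disjoint and μ(B) ≥ (1-ε)/d. -/

import Mathlib

open MeasureTheory Real Filter
open scoped symmDiff

noncomputable def shEntropy {α I : Type*} [MeasurableSpace α] (μ : Measure α) (P : I → Set α) : ℝ :=
  ∑' i, Real.negMulLog (μ (P i)).toReal

def IsPartitionOf {I : Type*} (Ω : Set ℝ) (P : I → Set ℝ) : Prop :=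
  (Pairwise fun i j => Disjoint (P i) (P j)) ∧ (⋃ i, P i) = Ω

def IsIntervalIn (Ω A : Set ℝ) : Prop :=
  A ⊆ Ω ∧ ∀ x ∈ A, ∀ z ∈ A, ∀ y ∈ Ω, x ≤ y → y ≤ z → y ∈ A

def IsMonotonyPartition {I : Type*} (Ω : Set ℝ) (T : ℝ → ℝ) (M : I → Set ℝ) : Prop :=
  IsPartitionOf Ω M ∧ ∀ i, IsIntervalIn Ω (M i) ∧ (MonotoneOn T (M i) ∨ StrictAntiOn T (M i))

def multiCell {I : Type*} (T : ℝ → ℝ) (P : I → Set ℝ) (n : ℕ) (a : Fin n → I) : Set ℝ :=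
  ⋂ k : Fin n, T^[(k : ℕ)] ⁻¹' P (a k)

def ordCell (Ω : Set ℝ) (T : ℝ → ℝ) (n : ℕ) (pp : Equiv.Perm (Fin n)) : Set ℝ :=
  {ω ∈ Ω | ∀ k l : Fin n, k ≤ l → T^[((pp k : Fin n) : ℕ)] ω ≤ T^[((pp l : Fin n) : ℕ)] ω}

noncomputable def entropyRate {I : Type*} (μ : Measure ℝ) (T : ℝ → ℝ) (P : I → Set ℝ) : ℝ :=
  liminf (fun n : ℕ => shEntropy μ (multiCell T P n) / (n : ℝ)) atTop

noncomputable def permEntropy (Ω : Set ℝ) (μ : Measure ℝ) (T : ℝ → ℝ) : ℝ :=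
  liminf (fun n : ℕ => shEntropy μ (ordCell Ω T n) / (n : ℝ)) atTop

noncomputable def ksEntropy (Ω : Set ℝ) (μ : Measure ℝ) (T : ℝ → ℝ) : ℝ :=
  sSup {h : ℝ | ∃ P : ℕ → Set ℝ, IsPartitionOf Ω P ∧ (∀ i, MeasurableSet (P i)) ∧
    (Summable fun i => Real.negMulLog (μ (P i)).toReal) ∧ h = entropyRate μ T P}

def Aperiodic (μ : Measure ℝ) (T : ℝ → ℝ) : Prop :=
  μ {ω | ∃ t, 1 ≤ t ∧ T^[t] ω = ω} = 0

open scoped ENNReal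

section RkAux

variable {X : Type*} [MeasurableSpace X] {T : X → X} {μ : Measure X}

/-- Union of all iterated preimages of `C`. -/
def rkSweep (T : X → X) (C : Set X) : Set X := ⋃ k : ℕ, T^[k] ⁻¹' C

/-- `A` is measurable and its first `N` iterated preimages are a.e. disjoint. -/
def rkGood (μ : Measure X) (T : X → X) (N : ℕ) (A : Set X) : Prop :=
  MeasurableSet A ∧ ∀ k, 1 ≤ k → k < N → μ (A ∩ T^[k] ⁻¹' A) = 0

lemma rkSweep_measurableSet (hT : Measurable T) {C : Set X} (hC : MeasurableSet C) :
    MeasurableSet (rkSweep T C) :=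
  MeasurableSet.iUnion fun k => (hT.iterate k) hC

lemma subset_rkSweep (T : X → X) (C : Set X) : C ⊆ rkSweep T C := by
  intro x hx
  exact Set.mem_iUnion.2 ⟨0, hx⟩

lemma rkSweep_mono {C D : Set X} (h : C ⊆ D) : rkSweep T C ⊆ rkSweep T D :=
  Set.iUnion_mono fun k => Set.preimage_mono h

lemma preimage_rkSweep_subset (T : X → X) (C : Set X) (k : ℕ) :
    T^[k] ⁻¹' rkSweep T C ⊆ rkSweep T C := by
  intro x hx
  obtain ⟨j, hj⟩ := Set.mem_iUnion.1 hx
  refine Set.mem_iUnion.2 ⟨j + k, ?_⟩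
  simpa [Function.iterate_add_apply] using hj

lemma preimage_subset_rkSweep (T : X → X) (C : Set X) (k : ℕ) :
    T^[k] ⁻¹' C ⊆ rkSweep T C := fun x hx => Set.mem_iUnion.2 ⟨k, hx⟩

/-- Poincaré: points of `C` whose `k`-th iterate never enters `C` again form a null set. -/
lemma rk_cross_null [IsProbabilityMeasure μ] (hT : MeasurePreserving T μ μ)
    {C : Set X} (hC : MeasurableSet C) (k : ℕ) :
    μ (C ∩ T^[k] ⁻¹' (rkSweep T C)ᶜ) = 0 := by
  have hcons := hT.conservative.ae_mem_imp_frequently_image_mem hC.nullMeasurableSet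
  rw [Filter.eventually_iff, mem_ae_iff] at hcons
  refine measure_mono_null ?_ hcons
  intro x ⟨hxC, hxk⟩
  simp only [Set.mem_compl_iff, Set.mem_setOf_eq]
  intro himp
  have hfreq := himp hxC
  obtain ⟨n, hnk, hn⟩ := (frequently_atTop.1 hfreq) k
  apply hxk
  refine Set.mem_iUnion.2 ⟨n - k, ?_⟩
  have : T^[n - k] (T^[k] x) = T^[n] x := by
    rw [← Function.iterate_add_apply, Nat.sub_add_cancel hnk]
  simpa [Set.mem_preimage, this] using hn

/-- Combining two good sets. -/
lemma rkGood_union [IsProbabilityMeasure μ] (hT : MeasurePreserving T μ μ) {N : ℕ}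
    {C₁ C₂ : Set X} (h₁ : rkGood μ T N C₁) (h₂ : rkGood μ T N C₂) :
    rkGood μ T N (C₁ ∪ (C₂ \ rkSweep T C₁)) ∧
      rkSweep T C₂ ⊆ rkSweep T (C₁ ∪ (C₂ \ rkSweep T C₁)) := by
  set D : Set X := C₂ \ rkSweep T C₁ with hD
  have hmeasT : Measurable T := hT.measurable
  have hDm : MeasurableSet D := h₂.1.diff (rkSweep_measurableSet hmeasT h₁.1)
  constructor
  · refine ⟨h₁.1.union hDm, fun k hk1 hkN => ?_⟩
    have hsub : (C₁ ∪ D) ∩ T^[k] ⁻¹' (C₁ ∪ D) ⊆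
        (C₁ ∩ T^[k] ⁻¹' C₁) ∪ ((C₁ ∩ T^[k] ⁻¹' (rkSweep T C₁)ᶜ) ∪
          ((D ∩ T^[k] ⁻¹' C₁) ∪ (C₂ ∩ T^[k] ⁻¹' C₂))) := by
      rintro x ⟨hx1, hx2⟩
      rcases hx1 with hx1 | hx1 <;> rcases hx2 with hx2 | hx2
      · exact Or.inl ⟨hx1, hx2⟩
      · exact Or.inr (Or.inl ⟨hx1, hx2.2⟩)
      · exact Or.inr (Or.inr (Or.inl ⟨hx1, hx2⟩))
      · exact Or.inr (Or.inr (Or.inr ⟨hx1.1, hx2.1⟩))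
    refine measure_mono_null hsub ?_
    refine measure_union_null (h₁.2 k hk1 hkN) (measure_union_null ?_ (measure_union_null ?_ ?_))
    · exact rk_cross_null hT h₁.1 k
    · have : D ∩ T^[k] ⁻¹' C₁ = ∅ := by
        apply Set.eq_empty_iff_forall_notMem.2
        rintro x ⟨⟨_, hxs⟩, hxk⟩
        exact hxs (preimage_subset_rkSweep T C₁ k hxk)
      rw [this]; exact measure_empty
    · exact h₂.2 k hk1 hkN
  · intro x hx
    obtain ⟨k, hk⟩ := Set.mem_iUnion.1 hx
    by_cases hmem : T^[k] x ∈ rkSweep T C₁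
    · have h1 : rkSweep T C₁ ⊆ rkSweep T (C₁ ∪ D) := rkSweep_mono Set.subset_union_left
      exact preimage_rkSweep_subset T (C₁ ∪ D) k
        (Set.mem_preimage.2 (h1 hmem))
    · refine preimage_subset_rkSweep T (C₁ ∪ D) k ?_
      exact Set.mem_preimage.2 (Or.inr ⟨hk, hmem⟩)

/-- A monotone union of good sets is good. -/
lemma rkGood_iUnion {N : ℕ} (Cs : ℕ → Set X) (hmono : Monotone Cs)
    (h : ∀ n, rkGood μ T N (Cs n)) : rkGood μ T N (⋃ n, Cs n) := by
  refine ⟨MeasurableSet.iUnion fun n => (h n).1, fun k hk1 hkN => ?_⟩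
  have hsub : (⋃ n, Cs n) ∩ T^[k] ⁻¹' (⋃ n, Cs n) ⊆
      ⋃ n : ℕ, ⋃ m : ℕ, Cs (max n m) ∩ T^[k] ⁻¹' Cs (max n m) := by
    rintro x ⟨hx1, hx2⟩
    obtain ⟨n, hn⟩ := Set.mem_iUnion.1 hx1
    obtain ⟨m, hm⟩ := Set.mem_iUnion.1 (Set.mem_preimage.1 hx2)
    refine Set.mem_iUnion.2 ⟨n, Set.mem_iUnion.2 ⟨m, ?_⟩⟩
    exact ⟨hmono (le_max_left n m) hn, hmono (le_max_right n m) hm⟩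
  refine measure_mono_null hsub ?_
  exact measure_iUnion_null fun n => measure_iUnion_null fun m => (h (max n m)).2 k hk1 hkN
/-- Basic lemma: inside any positive-measure set there is a positive-measure set whose
first `N` iterated preimages are genuinely disjoint from it. -/
lemma rk_exists_base {Y : Type*} [MetricSpace Y] [TopologicalSpace.SeparableSpace Y]
    [MeasurableSpace Y] [BorelSpace Y] (μ : Measure Y) {T : Y → Y} (hT : Measurable T)
    (hap : μ {ω | ∃ t, 1 ≤ t ∧ T^[t] ω = ω} = 0) (N : ℕ)
    {F : Set Y} (hF : MeasurableSet F) (hF0 : μ F ≠ 0) :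
    ∃ A, MeasurableSet A ∧ A ⊆ F ∧ μ A ≠ 0 ∧
      ∀ k, 1 ≤ k → k < N → A ∩ T^[k] ⁻¹' A = ∅ := by
  have : SecondCountableTopology Y := UniformSpace.secondCountable_of_separable Y
  obtain ⟨b, hbc, -, hbasis⟩ := TopologicalSpace.exists_countable_basis Y
  set AU : Set Y → Set Y := fun U => (F ∩ U) ∩ ⋂ k ∈ Set.Ico 1 N, T^[k] ⁻¹' Uᶜ with hAU
  have hAUm : ∀ U ∈ b, MeasurableSet (AU U) := by
    intro U hU
    have hUo : IsOpen U := hbasis.isOpen hU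
    refine (hF.inter hUo.measurableSet).inter ?_
    exact MeasurableSet.biInter (Set.to_countable _)
      (fun k _ => (hT.iterate k) hUo.measurableSet.compl)
  have hcover : F \ {ω | ∃ t, 1 ≤ t ∧ T^[t] ω = ω} ⊆ ⋃ U ∈ b, AU U := by
    rintro x ⟨hxF, hxPer⟩
    set S : Set Y := (fun k => T^[k] x) '' Set.Ico 1 N with hS
    have hSfin : S.Finite := Set.Finite.image _ (Set.finite_Ico 1 N)
    have hxS : x ∉ S := by
      rintro ⟨k, ⟨hk1, -⟩, hkx⟩
      exact hxPer ⟨k, hk1, hkx⟩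
    have hV : IsOpen Sᶜ := hSfin.isClosed.isOpen_compl
    obtain ⟨U, hUb, hxU, hUV⟩ := hbasis.exists_subset_of_mem_open hxS hV
    refine Set.mem_biUnion hUb ?_
    refine ⟨⟨hxF, hxU⟩, ?_⟩
    refine Set.mem_biInter fun k hk => ?_
    intro hkU
    exact (hUV hkU) (Set.mem_image_of_mem _ hk)
  have hpos : μ (⋃ U ∈ b, AU U) ≠ 0 := by
    intro h0
    apply hF0
    have : μ (F \ {ω | ∃ t, 1 ≤ t ∧ T^[t] ω = ω}) = μ F := measure_diff_null hap
    rw [← this]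
    exact measure_mono_null hcover h0
  have : ¬ ∀ U ∈ b, μ (AU U) = 0 := by
    intro hall
    exact hpos ((measure_biUnion_null_iff hbc).2 hall)
  push_neg at this
  obtain ⟨U, hUb, hU0⟩ := this
  refine ⟨AU U, hAUm U hUb, fun x hx => hx.1.1, hU0, fun k hk1 hkN => ?_⟩
  apply Set.eq_empty_iff_forall_notMem.2
  rintro x ⟨hx1, hx2⟩
  have hxUc : T^[k] x ∈ Uᶜ := by
    have := hx1.2
    rw [Set.mem_iInter₂] at this
    exact this k ⟨hk1, hkN⟩
  exact hxUc (Set.mem_preimage.1 hx2).1.2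
/-- Exhaustion: there is a good set whose sweep has full measure. -/
lemma rk_exists_sweeping {Y : Type*} [MetricSpace Y] [TopologicalSpace.SeparableSpace Y]
    [MeasurableSpace Y] [BorelSpace Y] (μ : Measure Y) [IsProbabilityMeasure μ]
    {T : Y → Y} (hT : MeasurePreserving T μ μ)
    (hap : μ {ω | ∃ t, 1 ≤ t ∧ T^[t] ω = ω} = 0) (N : ℕ) :
    ∃ C, rkGood μ T N C ∧ μ (rkSweep T C) = 1 := by
  have hmeasT : Measurable T := hT.measurable
  set s : ℝ≥0∞ := ⨆ A : {A : Set Y // rkGood μ T N A}, μ (rkSweep T A.1) with hs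
  have hgood_empty : rkGood μ T N (∅ : Set Y) :=
    ⟨MeasurableSet.empty, fun k _ _ => by simp⟩
  have hs_le : s ≤ 1 := iSup_le fun A => prob_le_one
  have hs_ne_top : s ≠ ∞ := (lt_of_le_of_lt hs_le ENNReal.one_lt_top).ne
  -- approximating sequence
  have hstep : ∀ n : ℕ, ∃ A : Set Y, rkGood μ T N A ∧
      s ≤ μ (rkSweep T A) + ((n : ℝ≥0∞))⁻¹ := by
    intro n
    rcases Nat.eq_zero_or_pos n with hn | hn
    · exact ⟨∅, hgood_empty, by simp [hn, le_top]⟩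
    rcases eq_or_ne s 0 with hs0 | hs0
    · exact ⟨∅, hgood_empty, by simp [hs0]⟩
    have hinv : ((n : ℝ≥0∞))⁻¹ ≠ 0 := by
      simp [ENNReal.inv_ne_zero]
    have hlt : s - ((n : ℝ≥0∞))⁻¹ < s := ENNReal.sub_lt_self hs_ne_top hs0 hinv
    rw [hs] at hlt
    obtain ⟨A, hA⟩ := lt_iSup_iff.1 hlt
    exact ⟨A.1, A.2, tsub_le_iff_right.1 (le_of_lt hA)⟩
  choose A hgoodA hboundA using hstep
  -- recursive combination
  set Cs : ℕ → Set Y := fun n =>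
    Nat.rec (A 0) (fun n Cn => Cn ∪ (A (n + 1) \ rkSweep T Cn)) n with hCs
  have hCs_succ : ∀ n, Cs (n + 1) = Cs n ∪ (A (n + 1) \ rkSweep T (Cs n)) := fun n => rfl
  have hgoodCs : ∀ n, rkGood μ T N (Cs n) := by
    intro n
    induction n with
    | zero => exact hgoodA 0
    | succ n ih =>
        rw [hCs_succ]
        exact (rkGood_union hT ih (hgoodA (n + 1))).1
  have hmono : Monotone Cs := by
    apply monotone_nat_of_le_succ
    intro n
    rw [hCs_succ]
    exact Set.subset_union_left
  have hswA : ∀ n, rkSweep T (A n) ⊆ rkSweep T (Cs n) := by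
    intro n
    cases n with
    | zero => exact subset_rfl
    | succ n =>
        rw [hCs_succ]
        exact (rkGood_union hT (hgoodCs n) (hgoodA (n + 1))).2
  set C : Set Y := ⋃ n, Cs n with hC
  have hgoodC : rkGood μ T N C := rkGood_iUnion Cs hmono hgoodCs
  have hCsub : ∀ n, rkSweep T (Cs n) ⊆ rkSweep T C :=
    fun n => rkSweep_mono (Set.subset_iUnion Cs n)
  have hsleC : s ≤ μ (rkSweep T C) := by
    have htend : Tendsto (fun n : ℕ => μ (rkSweep T C) + ((n : ℝ≥0∞))⁻¹) atTop
        (nhds (μ (rkSweep T C) + 0)) :=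
      Filter.Tendsto.const_add _ ENNReal.tendsto_inv_nat_nhds_zero
    rw [add_zero] at htend
    refine ge_of_tendsto' htend fun n => ?_
    calc s ≤ μ (rkSweep T (A n)) + ((n : ℝ≥0∞))⁻¹ := hboundA n
      _ ≤ μ (rkSweep T C) + ((n : ℝ≥0∞))⁻¹ :=
          add_le_add_left (measure_mono ((hswA n).trans (hCsub n))) _
  have hCles : μ (rkSweep T C) ≤ s := le_iSup
    (fun A : {A : Set Y // rkGood μ T N A} => μ (rkSweep T A.1)) ⟨C, hgoodC⟩
  have hseq : μ (rkSweep T C) = s := le_antisymm hCles hsleC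
  refine ⟨C, hgoodC, ?_⟩
  by_contra hne
  have hlt1 : μ (rkSweep T C) < 1 := lt_of_le_of_ne prob_le_one hne
  have hswm : MeasurableSet (rkSweep T C) := rkSweep_measurableSet hmeasT hgoodC.1
  have hF0 : μ (rkSweep T C)ᶜ ≠ 0 := by
    rw [prob_compl_eq_one_sub hswm]
    intro h0
    rw [tsub_eq_zero_iff_le] at h0
    exact absurd h0 (not_le.2 hlt1)
  obtain ⟨A', hA'm, hA'F, hA'0, hA'disj⟩ :=
    rk_exists_base μ hmeasT hap N hswm.compl hF0
  have hgoodA' : rkGood μ T N A' := ⟨hA'm, fun k hk1 hkN => by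
    rw [hA'disj k hk1 hkN]; exact measure_empty⟩
  have hkey := rkGood_union hT hgoodC hgoodA'
  have hdisj : Disjoint (rkSweep T C) A' := by
    rw [Set.disjoint_right]
    intro x hx
    exact fun hsw => (hA'F hx) hsw
  have hdiffeq : A' \ rkSweep T C = A' := sdiff_eq_self_iff_disjoint.2 hdisj
  rw [hdiffeq] at hkey
  have hlast : s + μ A' ≤ s := by
    calc s + μ A' = μ (rkSweep T C) + μ A' := by rw [hseq]
      _ = μ (rkSweep T C ∪ A') := (measure_union hdisj hA'm).symm
      _ ≤ μ (rkSweep T (C ∪ A')) := by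
          apply measure_mono
          apply Set.union_subset
          · exact rkSweep_mono Set.subset_union_left
          · exact (subset_rkSweep T (C ∪ A')).trans' Set.subset_union_right
      _ ≤ s := le_iSup
          (fun A : {A : Set Y // rkGood μ T N A} => μ (rkSweep T A.1)) ⟨C ∪ A', hkey.1⟩
  have : s < s + μ A' := ENNReal.lt_add_right hs_ne_top hA'0
  exact absurd hlast (not_le.2 this)
/-- First entry to `C` happens exactly at time `k`. -/
def rkEnt (T : X → X) (C : Set X) (k : ℕ) : Set X :=
  T^[k] ⁻¹' C ∩ ⋂ i ∈ Set.Iio k, (T^[i] ⁻¹' C)ᶜ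

lemma mem_rkEnt {C : Set X} {k : ℕ} {x : X} :
    x ∈ rkEnt T C k ↔ T^[k] x ∈ C ∧ ∀ i < k, T^[i] x ∉ C := by
  simp [rkEnt]

lemma rkEnt_measurableSet (hT : Measurable T) {C : Set X} (hC : MeasurableSet C) (k : ℕ) :
    MeasurableSet (rkEnt T C k) :=
  ((hT.iterate k) hC).inter <| MeasurableSet.biInter (Set.to_countable _)
    fun i _ => ((hT.iterate i) hC).compl

lemma rkEnt_shift {C : Set X} {k m : ℕ} (hm : m ≤ k) {x : X} (hx : x ∈ rkEnt T C k) :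
    T^[m] x ∈ rkEnt T C (k - m) := by
  rw [mem_rkEnt] at hx ⊢
  constructor
  · have : T^[k - m] (T^[m] x) = T^[k] x := by
      rw [← Function.iterate_add_apply]
      congr 1
      omega
    rw [this]
    exact hx.1
  · intro i hi
    rw [← Function.iterate_add_apply]
    exact hx.2 (i + m) (by omega)

lemma rkEnt_inter_eq_empty {C : Set X} {a b : ℕ} (hab : a ≠ b) :
    rkEnt T C a ∩ rkEnt T C b = ∅ := by
  apply Set.eq_empty_iff_forall_notMem.2
  rintro x ⟨hxa, hxb⟩
  rw [mem_rkEnt] at hxa hxb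
  rcases Nat.lt_or_ge a b with h | h
  · exact hxb.2 a h hxa.1
  · exact hxa.2 b (by omega) hxb.1

lemma rkSweep_subset_iUnion_rkEnt (T : X → X) (C : Set X) :
    rkSweep T C ⊆ ⋃ k, rkEnt T C k := by
  intro x hx
  obtain ⟨k, hk⟩ := Set.mem_iUnion.1 hx
  classical
  have hex : ∃ k, T^[k] x ∈ C := ⟨k, hk⟩
  refine Set.mem_iUnion.2 ⟨Nat.find hex, ?_⟩
  rw [mem_rkEnt]
  exact ⟨Nat.find_spec hex, fun i hi => Nat.find_min hex hi⟩
end RkAux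
theorem stmt3 {X : Type*} [MetricSpace X] [TopologicalSpace.SeparableSpace X]
    [MeasurableSpace X] [BorelSpace X]
    (μ : Measure X) [IsProbabilityMeasure μ] (T : X → X)
    (hT : MeasurePreserving T μ μ)
    (hap : μ {ω | ∃ t, 1 ≤ t ∧ T^[t] ω = ω} = 0)
    (d : ℕ) (hd : 0 < d) (ε : ℝ) (hε : 0 < ε) :
    ∃ B : Set X, MeasurableSet B ∧
      (∀ i j, i < d → j < d → i ≠ j → Disjoint (T^[i] ⁻¹' B) (T^[j] ⁻¹' B)) ∧
      ENNReal.ofReal ((1 - ε) / d) ≤ μ B := by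
  have hmeasT : Measurable T := hT.measurable
  set N : ℕ := max ⌈(d : ℝ) / ε⌉₊ 1 with hNdef
  have hN1 : 1 ≤ N := le_max_right _ _
  have hN0 : (0 : ℝ) < N := by exact_mod_cast hN1
  have hNε : (d : ℝ) ≤ ε * N := by
    have h1 : (d : ℝ) / ε ≤ (⌈(d : ℝ) / ε⌉₊ : ℝ) := Nat.le_ceil _
    have h2 : ((⌈(d : ℝ) / ε⌉₊ : ℕ) : ℝ) ≤ (N : ℝ) := by
      exact_mod_cast le_max_left _ 1
    have := h1.trans h2
    rw [div_le_iff₀ hε] at this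
    linarith
  obtain ⟨C, hgoodC, hsweep1⟩ := rk_exists_sweeping μ hT hap N
  have hCm : MeasurableSet C := hgoodC.1
  have hpre : ∀ (k : ℕ) (S : Set X), MeasurableSet S → μ (T^[k] ⁻¹' S) = μ S :=
    fun k S hS => (hT.iterate k).measure_preimage hS.nullMeasurableSet
  -- pairwise a.e. disjointness of the first N preimages of C
  have hpair : ∀ i j : ℕ, i < j → j < N → μ (T^[i] ⁻¹' C ∩ T^[j] ⁻¹' C) = 0 := by
    intro i j hij hjN
    have h1 : T^[i] ⁻¹' C ∩ T^[j] ⁻¹' C = T^[i] ⁻¹' (C ∩ T^[j - i] ⁻¹' C) := by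
      rw [Set.preimage_inter]
      congr 1
      rw [← Set.preimage_comp, ← Function.iterate_add, Nat.sub_add_cancel hij.le]
    rw [h1, hpre i _ (hCm.inter ((hmeasT.iterate _) hCm))]
    exact hgoodC.2 (j - i) (by omega) (lt_of_le_of_lt (Nat.sub_le j i) hjN)
  -- μ C is small : N * μ C ≤ 1
  have hNC : (N : ℝ≥0∞) * μ C ≤ 1 := by
    have hae : Pairwise (Function.onFun (MeasureTheory.AEDisjoint μ) fun i : Fin N => T^[(i : ℕ)] ⁻¹' C) := by
      intro i j hij
      rcases Nat.lt_or_ge (i : ℕ) (j : ℕ) with h | h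
      · exact hpair i j h j.isLt
      · have hne : (i : ℕ) ≠ (j : ℕ) := fun hh => hij (Fin.ext hh)
        have hlt : (j : ℕ) < (i : ℕ) := by omega
        have := hpair j i hlt i.isLt
        rwa [Set.inter_comm] at this
    have hsum := measure_iUnion₀ (μ := μ) hae
      (fun i => ((hmeasT.iterate (i : ℕ)) hCm).nullMeasurableSet)
    calc (N : ℝ≥0∞) * μ C = ∑' i : Fin N, μ (T^[(i : ℕ)] ⁻¹' C) := by
          rw [tsum_fintype]
          simp only [fun i : Fin N => hpre (i : ℕ) C hCm]
          simp [Finset.sum_const, mul_comm]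
      _ = μ (⋃ i : Fin N, T^[(i : ℕ)] ⁻¹' C) := hsum.symm
      _ ≤ 1 := prob_le_one
  -- the Rokhlin base
  set B : Set X := ⋃ j : ℕ, rkEnt T C ((j + 1) * d) with hBdef
  have hBm : MeasurableSet B :=
    MeasurableSet.iUnion fun j => rkEnt_measurableSet hmeasT hCm _
  have hBme : ∀ k, μ (T^[k] ⁻¹' B) = μ B := fun k => hpre k B hBm
  -- genuine disjointness
  have hBdisj : ∀ m, 1 ≤ m → m < d → B ∩ T^[m] ⁻¹' B = ∅ := by
    intro m hm1 hmd
    apply Set.eq_empty_iff_forall_notMem.2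
    rintro x ⟨hx1, hx2⟩
    obtain ⟨j, hj⟩ := Set.mem_iUnion.1 hx1
    obtain ⟨j', hj'⟩ := Set.mem_iUnion.1 (Set.mem_preimage.1 hx2)
    have hmle : m ≤ (j + 1) * d := le_trans (le_of_lt hmd) (Nat.le_mul_of_pos_left d (by omega))
    have hshift := rkEnt_shift hmle hj
    have heq : (j + 1) * d - m = (j' + 1) * d := by
      by_contra hne
      have := rkEnt_inter_eq_empty (T := T) (C := C) hne
      exact absurd this (by
        apply Set.nonempty_iff_ne_empty.1
        exact ⟨T^[m] x, hshift, hj'⟩)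
    have heq2 : (j + 1) * d = (j' + 1) * d + m := by omega
    have h0 : (j + 1) * d % d = 0 := Nat.mul_mod_left _ _
    have h1 : ((j' + 1) * d + m) % d = m % d := by
      rw [Nat.add_comm, Nat.add_mul_mod_self_right]
    have h2 : m % d = m := Nat.mod_eq_of_lt hmd
    rw [heq2, h1, h2] at h0
    omega
    -- pairwise disjointness of the d preimages
  have hdisj2 : ∀ i j, i < j → j < d → Disjoint (T^[i] ⁻¹' B) (T^[j] ⁻¹' B) := by
    intro i j hij hjd
    rw [Set.disjoint_iff_inter_eq_empty]
    have h1 : T^[i] ⁻¹' B ∩ T^[j] ⁻¹' B = T^[i] ⁻¹' (B ∩ T^[j - i] ⁻¹' B) := by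
      rw [Set.preimage_inter]
      congr 1
      rw [← Set.preimage_comp, ← Function.iterate_add, Nat.sub_add_cancel hij.le]
    rw [h1, hBdisj (j - i) (by omega) (lt_of_le_of_lt (Nat.sub_le j i) hjd),
      Set.preimage_empty]
  have hdisjall : ∀ i j, i < d → j < d → i ≠ j → Disjoint (T^[i] ⁻¹' B) (T^[j] ⁻¹' B) := by
    intro i j hi hj hij
    rcases Nat.lt_or_ge i j with h | h
    · exact hdisj2 i j h hj
    · exact (hdisj2 j i (by omega) hi).symm
  -- coverage
  have hcover : Set.univ ⊆ (⋃ m ∈ Finset.range d, T^[m] ⁻¹' B) ∪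
      ((rkSweep T C)ᶜ ∪ ⋃ k ∈ Finset.range d, rkEnt T C k) := by
    intro x _
    by_cases hx : x ∈ rkSweep T C
    · obtain ⟨k, hk⟩ := Set.mem_iUnion.1 (rkSweep_subset_iUnion_rkEnt T C hx)
      rcases Nat.lt_or_ge k d with hkd | hkd
      · exact Or.inr (Or.inr (Set.mem_biUnion (Finset.mem_range.2 hkd) hk))
      · -- k ≥ d : shift by k % d
        set m : ℕ := k % d with hm
        have hmd : m < d := Nat.mod_lt _ hd
        have hmk : m ≤ k := Nat.mod_le _ _
        have hshift := rkEnt_shift hmk hk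
        have hq : 1 ≤ k / d := Nat.one_le_div_iff hd |>.2 hkd
        have hkm : k - m = (k / d - 1 + 1) * d := by
          have h1 : d * (k / d) + k % d = k := Nat.div_add_mod k d
          have h2 : k / d - 1 + 1 = k / d := by omega
          rw [h2]
          rw [Nat.mul_comm] at h1
          omega
        refine Or.inl (Set.mem_biUnion (Finset.mem_range.2 hmd) ?_)
        refine Set.mem_preimage.2 (Set.mem_iUnion.2 ⟨k / d - 1, ?_⟩)
        rw [← hkm]
        exact hshift
    · exact Or.inr (Or.inl hx)
  -- measure estimate : 1 ≤ d * μ B + d * μ C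
  have hmain : (1 : ℝ≥0∞) ≤ d * μ B + d * μ C := by
    have hu : μ (Set.univ : Set X) = 1 := measure_univ
    have hcompl : μ (rkSweep T C)ᶜ = 0 := by
      rw [prob_compl_eq_one_sub (rkSweep_measurableSet hmeasT hCm), hsweep1, tsub_self]
    calc (1 : ℝ≥0∞) = μ (Set.univ : Set X) := hu.symm
      _ ≤ μ ((⋃ m ∈ Finset.range d, T^[m] ⁻¹' B) ∪
          ((rkSweep T C)ᶜ ∪ ⋃ k ∈ Finset.range d, rkEnt T C k)) := measure_mono hcover
      _ ≤ μ (⋃ m ∈ Finset.range d, T^[m] ⁻¹' B) +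
          (μ (rkSweep T C)ᶜ + μ (⋃ k ∈ Finset.range d, rkEnt T C k)) :=
        le_trans (measure_union_le _ _) (by gcongr; exact measure_union_le _ _)
      _ ≤ (∑ m ∈ Finset.range d, μ (T^[m] ⁻¹' B)) +
          (0 + ∑ k ∈ Finset.range d, μ (rkEnt T C k)) := by
        gcongr
        · exact measure_biUnion_finset_le _ _
        · rw [hcompl]
        · exact measure_biUnion_finset_le _ _
      _ ≤ (∑ _m ∈ Finset.range d, μ B) + (0 + ∑ _k ∈ Finset.range d, μ C) := by
        refine add_le_add (Finset.sum_le_sum fun m _ => le_of_eq (hBme m))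
          (add_le_add le_rfl (Finset.sum_le_sum fun k _ => ?_))
        exact le_trans (measure_mono Set.inter_subset_left) (le_of_eq (hpre k C hCm))
      _ = d * μ B + d * μ C := by
        simp [Finset.sum_const, mul_comm]
  -- pass to real numbers
  have hBtop : μ B ≠ ∞ := measure_ne_top μ B
  have hCtop : μ C ≠ ∞ := measure_ne_top μ C
  have hRHStop : (d : ℝ≥0∞) * μ B + (d : ℝ≥0∞) * μ C ≠ ∞ :=
    ENNReal.add_ne_top.2 ⟨ENNReal.mul_ne_top (ENNReal.natCast_ne_top d) hBtop,
      ENNReal.mul_ne_top (ENNReal.natCast_ne_top d) hCtop⟩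
  have hmainR : (1 : ℝ) ≤ d * (μ B).toReal + d * (μ C).toReal := by
    have := ENNReal.toReal_mono hRHStop hmain
    rwa [ENNReal.toReal_one, ENNReal.toReal_add (ENNReal.mul_ne_top
      (ENNReal.natCast_ne_top d) hBtop) (ENNReal.mul_ne_top (ENNReal.natCast_ne_top d) hCtop),
      ENNReal.toReal_mul, ENNReal.toReal_mul, ENNReal.toReal_natCast] at this
  have hNCR : (N : ℝ) * (μ C).toReal ≤ 1 := by
    have h1 : (N : ℝ≥0∞) * μ C ≠ ∞ := ENNReal.mul_ne_top (ENNReal.natCast_ne_top N) hCtop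
    have := ENNReal.toReal_mono (by simp) hNC
    rwa [ENNReal.toReal_mul, ENNReal.toReal_natCast, ENNReal.toReal_one] at this
  have hdC : (d : ℝ) * (μ C).toReal ≤ ε := by
    have hc0 : (0 : ℝ) ≤ (μ C).toReal := ENNReal.toReal_nonneg
    nlinarith
  have hfinal : (1 - ε) / (d : ℝ) ≤ (μ B).toReal := by
    have hd0 : (0 : ℝ) < d := by exact_mod_cast hd
    rw [div_le_iff₀ hd0]
    nlinarith
  exact ⟨B, hBm, hdisjall, ENNReal.ofReal_le_of_le_toReal hfinal⟩
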